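/- Fix t ∈ [0,T] and X ∈ L²(F_T), and define h(x) := E[l(t, x + X)] for x ∈ ℝ. Under the assumptions on l and E, the function h is strictly increasing, continuous, satisfies h(x) ≥ E[l(t,X)] + c_l x e^{-κT} for x ≥ 0 and h(-x) ≤ E[l(t,X)] - c_l x e^{-κT} for x ≥ 0, hence lim_{x→+∞} h(x) = +∞ and lim_{x→-∞} h(x) = -∞, and therefore h: ℝ → ℝ is a bijection and possesses an inverse. -/

import Mathlib

open MeasureTheory Real Set Filter

/-- Fix `t ∈ [0,T]` and `X ∈ L²(F_T)` and set
`h(x) := E[l(t, x + X)]` (the loss at time `t` is `lt : Ω → ℝ → ℝ`).  Under the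
assumptions on `l` (strictly increasing and bi-Lipschitz in `x`) and on `E`
(monotone, dominated by the g-expectations `G^{±κ}_{0,T}`), the function `h` is
strictly increasing, continuous, satisfies
`h(x) ≥ E[l(t,X)] + c_l x e^{-κT}` and `h(-x) ≤ E[l(t,X)] - c_l x e^{-κT}` for
`x ≥ 0`, hence `h(x) → ±∞` as `x → ±∞`, and therefore `h : ℝ → ℝ` is a bijection
and possesses an inverse. -/
theorem stmt_5 {Ω : Type*} [MeasurableSpace Ω] (P : Measure Ω) [IsProbabilityMeasure P]
    (T κ cl Cl CκT : ℝ) (hT : 0 < T) (hκ : 0 < κ) (hcl : 0 < cl) (hCl : cl ≤ Cl)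
    (E Gpos Gneg : (Ω → ℝ) → ℝ)
    -- monotonicity of `E`
    (hEmono : ∀ X Y : Ω → ℝ, (∀ᵐ ω ∂P, X ω ≤ Y ω) → E X ≤ E Y)
    -- two-sided domination of `E` by the g-expectations
    (hdom : ∀ X₁ X₂ : Ω → ℝ,
      Gneg (fun ω => X₁ ω - X₂ ω) ≤ E X₁ - E X₂
        ∧ E X₁ - E X₂ ≤ Gpos (fun ω => X₁ ω - X₂ ω))
    (hGnegmono : ∀ X Y : Ω → ℝ, (∀ᵐ ω ∂P, X ω ≤ Y ω) → Gneg X ≤ Gneg Y)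
    (hGposmono : ∀ X Y : Ω → ℝ, (∀ᵐ ω ∂P, X ω ≤ Y ω) → Gpos X ≤ Gpos Y)
    -- values of the g-expectations on constants
    (hGnegconst : ∀ c : ℝ, 0 ≤ c → Gneg (fun _ => c) = c * Real.exp (-κ * T))
    (hGposconst : ∀ c : ℝ, 0 ≤ c → Gpos (fun _ => -c) = -(c * Real.exp (-κ * T)))
    -- the L² estimate `|G^κ[Z]|² ≤ C_{κ,T} E[|Z|²]`
    (hGposL2 : ∀ Z : Ω → ℝ, (Gpos Z) ^ 2 ≤ CκT * ∫ ω, (Z ω) ^ 2 ∂P)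
    -- the loss function at the fixed time `t`
    (lt : Ω → ℝ → ℝ)
    (hlmono : ∀ ω, StrictMono (lt ω))
    (hbilip : ∀ ω x y, cl * |x - y| ≤ |lt ω x - lt ω y|
      ∧ |lt ω x - lt ω y| ≤ Cl * |x - y|)
    (hl0 : MemLp (fun ω => lt ω 0) 2 P)
    (X : Ω → ℝ) (hX : MemLp X 2 P) :
    StrictMono (fun x : ℝ => E (fun ω => lt ω (x + X ω)))
      ∧ Continuous (fun x : ℝ => E (fun ω => lt ω (x + X ω)))
      ∧ (∀ x : ℝ, 0 ≤ x →
          E (fun ω => lt ω (X ω)) + cl * x * Real.exp (-κ * T)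
            ≤ E (fun ω => lt ω (x + X ω)))
      ∧ (∀ x : ℝ, 0 ≤ x →
          E (fun ω => lt ω (-x + X ω))
            ≤ E (fun ω => lt ω (X ω)) - cl * x * Real.exp (-κ * T))
      ∧ Tendsto (fun x : ℝ => E (fun ω => lt ω (x + X ω))) atTop atTop
      ∧ Tendsto (fun x : ℝ => E (fun ω => lt ω (x + X ω))) atBot atBot
      ∧ Function.Bijective (fun x : ℝ => E (fun ω => lt ω (x + X ω))) := by
  classical
  set D := Real.exp (-κ * T) with hD
  have hDpos : 0 < D := Real.exp_pos _
  -- pointwise two-sided estimate on increments of lt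
  have key : ∀ ω (a b : ℝ), a ≤ b →
      cl * (b - a) ≤ lt ω b - lt ω a ∧ lt ω b - lt ω a ≤ Cl * (b - a) := by
    intro ω a b hab
    rcases eq_or_lt_of_le hab with rfl | h
    · simp
    · have hlt : lt ω a < lt ω b := hlmono ω h
      have h1 := (hbilip ω b a).1
      have h2 := (hbilip ω b a).2
      rw [abs_of_nonneg (by linarith : (0:ℝ) ≤ b - a),
        abs_of_nonneg (by linarith : (0:ℝ) ≤ lt ω b - lt ω a)] at h1 h2
      exact ⟨h1, h2⟩
  -- lower bound on increments of h
  have gap : ∀ x y : ℝ, x ≤ y →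
      cl * (y - x) * D ≤ E (fun ω => lt ω (y + X ω)) - E (fun ω => lt ω (x + X ω)) := by
    intro x y hxy
    have h1 := (hdom (fun ω => lt ω (y + X ω)) (fun ω => lt ω (x + X ω))).1
    have h2 : Gneg (fun _ => cl * (y - x)) ≤
        Gneg (fun ω => lt ω (y + X ω) - lt ω (x + X ω)) := by
      apply hGnegmono
      filter_upwards with ω
      have hk := (key ω (x + X ω) (y + X ω) (by linarith)).1
      have e : (y + X ω) - (x + X ω) = y - x := by ring
      rw [e] at hk; exact hk
    rw [hGnegconst _ (mul_nonneg hcl.le (by linarith))] at h2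
    linarith
  have hCl0 : 0 < Cl := lt_of_lt_of_le hcl hCl
  -- Lipschitz bound for Gpos on bounded variables
  have gposb : ∀ (Z : Ω → ℝ) (M : ℝ), 0 ≤ M → (∀ ω, |Z ω| ≤ M) →
      Gpos Z ≤ Real.sqrt (max CκT 0) * M := by
    intro Z M hM hZ
    have hint0 : 0 ≤ ∫ ω, (Z ω) ^ 2 ∂P := integral_nonneg fun ω => sq_nonneg _
    have h2 : ∫ ω, (Z ω) ^ 2 ∂P ≤ M ^ 2 := by
      have : ∫ ω, (Z ω) ^ 2 ∂P ≤ ∫ _ω, M ^ 2 ∂P := by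
        apply integral_mono_of_nonneg
        · filter_upwards with ω; positivity
        · exact integrable_const _
        · filter_upwards with ω
          exact sq_le_sq' (by linarith [(abs_le.1 (hZ ω)).1]) (abs_le.1 (hZ ω)).2
      simpa using this
    have h3 : (Gpos Z) ^ 2 ≤ max CκT 0 * M ^ 2 := by
      calc (Gpos Z) ^ 2 ≤ CκT * ∫ ω, (Z ω) ^ 2 ∂P := hGposL2 Z
        _ ≤ max CκT 0 * ∫ ω, (Z ω) ^ 2 ∂P :=
            mul_le_mul_of_nonneg_right (le_max_left _ _) hint0
        _ ≤ max CκT 0 * M ^ 2 := mul_le_mul_of_nonneg_left h2 (le_max_right _ _)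
    calc Gpos Z ≤ |Gpos Z| := le_abs_self _
      _ = Real.sqrt ((Gpos Z) ^ 2) := (Real.sqrt_sq_eq_abs _).symm
      _ ≤ Real.sqrt (max CκT 0 * M ^ 2) := Real.sqrt_le_sqrt h3
      _ = Real.sqrt (max CκT 0) * M := by
          rw [Real.sqrt_mul (le_max_right _ _), Real.sqrt_sq hM]
  set L : ℝ := Real.sqrt (max CκT 0) * Cl with hLdef
  have hLnn : 0 ≤ L := mul_nonneg (Real.sqrt_nonneg _) hCl0.le
  -- Lipschitz estimate for h
  have lip : ∀ x y : ℝ, x ≤ y →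
      |E (fun ω => lt ω (y + X ω)) - E (fun ω => lt ω (x + X ω))| ≤ L * (y - x) := by
    intro x y hxy
    have hM : (0:ℝ) ≤ Cl * (y - x) := mul_nonneg hCl0.le (by linarith)
    have hbd : ∀ ω, |lt ω (y + X ω) - lt ω (x + X ω)| ≤ Cl * (y - x) := by
      intro ω
      have hk := key ω (x + X ω) (y + X ω) (by linarith)
      have e : (y + X ω) - (x + X ω) = y - x := by ring
      rw [e] at hk
      rw [abs_le]
      constructor
      · nlinarith [hk.1]
      · exact hk.2
    have hbd' : ∀ ω, |lt ω (x + X ω) - lt ω (y + X ω)| ≤ Cl * (y - x) := by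
      intro ω; rw [abs_sub_comm]; exact hbd ω
    have hu := (hdom (fun ω => lt ω (y + X ω)) (fun ω => lt ω (x + X ω))).2
    have hl := (hdom (fun ω => lt ω (x + X ω)) (fun ω => lt ω (y + X ω))).2
    have gu := gposb _ _ hM hbd
    have gl := gposb _ _ hM hbd'
    have he : Real.sqrt (max CκT 0) * (Cl * (y - x)) = L * (y - x) := by
      rw [hLdef]; ring
    rw [he] at gu gl
    rw [abs_le]
    constructor <;> linarith
  have hcont : Continuous (fun x : ℝ => E (fun ω => lt ω (x + X ω))) := by
    have : LipschitzWith (Real.toNNReal L) (fun x : ℝ => E (fun ω => lt ω (x + X ω))) := by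
      apply LipschitzWith.of_dist_le_mul
      intro x y
      rcases le_total x y with h | h
      · rw [Real.dist_eq, Real.dist_eq, abs_sub_comm,
          abs_of_nonpos (by linarith : x - y ≤ 0)]
        have := lip x y h
        calc |E (fun ω => lt ω (y + X ω)) - E (fun ω => lt ω (x + X ω))| ≤ L * (y - x) := this
          _ = ↑(Real.toNNReal L) * -(x - y) := by
              rw [Real.coe_toNNReal _ hLnn]; ring
      · rw [Real.dist_eq, Real.dist_eq, abs_of_nonneg (by linarith : (0:ℝ) ≤ x - y)]
        have := lip y x h
        calc |E (fun ω => lt ω (x + X ω)) - E (fun ω => lt ω (y + X ω))| ≤ L * (x - y) := this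
          _ = ↑(Real.toNNReal L) * (x - y) := by rw [Real.coe_toNNReal _ hLnn]
    exact this.continuous
  have hsm : StrictMono (fun x : ℝ => E (fun ω => lt ω (x + X ω))) := by
    intro x y hxy
    have := gap x y hxy.le
    have hpos : 0 < cl * (y - x) * D := by
      apply mul_pos (mul_pos hcl (by linarith)) hDpos
    simp only []
    linarith
  have hlow : ∀ x : ℝ, 0 ≤ x →
      E (fun ω => lt ω (X ω)) + cl * x * Real.exp (-κ * T)
        ≤ E (fun ω => lt ω (x + X ω)) := by
    intro x hx
    have := gap 0 x hx
    simp only [zero_add, sub_zero] at this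
    linarith
  have hupp : ∀ x : ℝ, 0 ≤ x →
      E (fun ω => lt ω (-x + X ω))
        ≤ E (fun ω => lt ω (X ω)) - cl * x * Real.exp (-κ * T) := by
    intro x hx
    have := gap (-x) 0 (by linarith)
    simp only [zero_add, sub_neg_eq_add, zero_sub, neg_neg] at this
    linarith
  have htop : Tendsto (fun x : ℝ => E (fun ω => lt ω (x + X ω))) atTop atTop := by
    have h1 : Tendsto (fun x : ℝ => E (fun ω => lt ω (X ω)) + cl * D * x) atTop atTop := by
      apply tendsto_atTop_add_const_left
      exact Tendsto.const_mul_atTop (mul_pos hcl hDpos) tendsto_id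
    apply tendsto_atTop_mono' _ _ h1
    filter_upwards [eventually_ge_atTop (0:ℝ)] with x hx
    have := hlow x hx
    have e : cl * D * x = cl * x * Real.exp (-κ * T) := by rw [hD]; ring
    rw [e]; exact this
  have hbot : Tendsto (fun x : ℝ => E (fun ω => lt ω (x + X ω))) atBot atBot := by
    have h1 : Tendsto (fun x : ℝ => E (fun ω => lt ω (X ω)) + cl * D * x) atBot atBot := by
      apply tendsto_atBot_add_const_left
      exact Tendsto.const_mul_atBot (mul_pos hcl hDpos) tendsto_id
    apply tendsto_atBot_mono' _ _ h1
    filter_upwards [eventually_le_atBot (0:ℝ)] with x hx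
    have h2 := hupp (-x) (by linarith)
    simp only [neg_neg] at h2
    have e : E (fun ω => lt ω (X ω)) - cl * -x * Real.exp (-κ * T)
        = E (fun ω => lt ω (X ω)) + cl * D * x := by rw [hD]; ring
    rw [e] at h2
    exact h2
  exact ⟨hsm, hcont, hlow, hupp, htop, hbot, hsm.injective,
    hcont.surjective htop hbot⟩
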